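/- Let n₁, n₂, n₃, n₄ be integers with |n_j| ≥ 3 for j = 1,…,4, n₁ + n₂ + n₃ + n₄ = 0, and λ(n₁) + λ(n₂) + λ(n₃) + λ(n₄) = 0. Then (n₁, n₂, n₃, n₄) is totally degenerate, i.e., it is a permutation of (k, −k, l, −l) for some integers k, l. In other words, all 4-wave resonances of λ are totally degenerate. -/
import Mathlib

/-- The dispersion relation λ(n) = sgn(n)·(1 + 3/(n² − 4)) for |n| ≥ 3. -/
noncomputable def lam (n : ℤ) : ℝ :=
  if 3 ≤ |n| then (Int.sign n : ℝ) * (1 + 3 / ((n : ℝ) ^ 2 - 4)) else 0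

/-- A 4-tuple is totally degenerate if it is a permutation of (k, −k, l, −l). -/
def TotallyDegenerate (n₁ n₂ n₃ n₄ : ℤ) : Prop :=
  ∃ k l : ℤ, ({n₁, n₂, n₃, n₄} : Multiset ℤ) = ({k, -k, l, -l} : Multiset ℤ)

lemma lam_eq (n : ℤ) (h : 3 ≤ n) : lam n = 1 + 3 / ((n : ℝ) ^ 2 - 4) := by
  have h1 : 3 ≤ |n| := by rw [abs_of_nonneg (by omega)]; exact h
  have h2 : n.sign = 1 := Int.sign_eq_one_of_pos (by omega)
  simp [lam, h1, h2]

lemma den_pos (n : ℤ) (h : 3 ≤ n) : (5:ℝ) ≤ (n : ℝ) ^ 2 - 4 := by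
  have : (3:ℝ) ≤ (n:ℝ) := by exact_mod_cast h
  nlinarith

lemma Cpos (s p q : ℤ) (hp9 : 9 ≤ p) (hq9 : 9 ≤ q) (hp4 : 4 * p ≤ s^2)
    (hq4 : 4 * q ≤ s^2) (hs6 : 6 ≤ s) :
    0 < (s^2 - 8) * (p + q) - 2 * p * q - 32 := by
  have hs36 : 36 ≤ s^2 := by nlinarith
  have h1 : 4 * p * q ≤ s^2 * q := by nlinarith
  have h2 : 4 * p * q ≤ s^2 * p := by nlinarith
  have h3 : (76:ℤ) * 18 ≤ (3 * s^2 - 32) * (p + q) :=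
    mul_le_mul (by linarith) (by linarith) (by norm_num) (by linarith)
  nlinarith [h1, h2, h3]

lemma key (a b c d : ℤ) (ha : 3 ≤ a) (hb : 3 ≤ b) (hc : 3 ≤ c) (hd : 3 ≤ d)
    (hs : a + b = c + d) (hf : lam a + lam b = lam c + lam d) :
    (a = c ∧ b = d) ∨ (a = d ∧ b = c) := by
  rw [lam_eq a ha, lam_eq b hb, lam_eq c hc, lam_eq d hd] at hf
  have hA := den_pos a ha
  have hB := den_pos b hb
  have hC := den_pos c hc
  have hD := den_pos d hd
  have hE : ((a:ℝ)^2 + b^2 - 8) * (((c:ℝ)^2 - 4) * ((d:ℝ)^2 - 4))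
      = ((c:ℝ)^2 + d^2 - 8) * (((a:ℝ)^2 - 4) * ((b:ℝ)^2 - 4)) := by
    field_simp at hf
    linear_combination hf / 3
  have hEZ : (a^2 + b^2 - 8) * ((c^2 - 4) * (d^2 - 4))
      = (c^2 + d^2 - 8) * ((a^2 - 4) * (b^2 - 4)) := by exact_mod_cast hE
  have hd' : d = a + b - c := by omega
  subst hd'
  have hp9 : 9 ≤ a * b := by nlinarith
  have hq9 : 9 ≤ c * (a + b - c) := by nlinarith
  have hp4 : 4 * (a * b) ≤ (a+b)^2 := by nlinarith [sq_nonneg (a - b)]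
  have hq4 : 4 * (c * (a + b - c)) ≤ (a+b)^2 := by nlinarith [sq_nonneg (a + b - 2*c)]
  have hCpos := Cpos (a+b) (a*b) (c*(a+b-c)) hp9 hq9 hp4 hq4 (by omega)
  have hfac : (a*b - c*(a+b-c)) *
      (((a+b)^2 - 8) * (a*b + c*(a+b-c)) - 2*(a*b)*(c*(a+b-c)) - 32) = 0 := by
    linear_combination -hEZ
  have hpq : a*b = c*(a+b-c) := by
    rcases mul_eq_zero.mp hfac with h | h
    · omega
    · omega
  have h0 : (c - a) * (c - b) = 0 := by linear_combination hpq
  rcases mul_eq_zero.mp h0 with h | h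
  · left; omega
  · right; omega

lemma lam_neg (n : ℤ) : lam (-n) = - lam n := by
  unfold lam
  rw [abs_neg, Int.sign_neg]
  split <;> push_cast <;> ring

lemma lam_lb (n : ℤ) (h : 3 ≤ n) : 1 < lam n := by
  rw [lam_eq n h]
  have := den_pos n h
  have : 0 < 3 / ((n : ℝ) ^ 2 - 4) := by positivity
  linarith

lemma lam_ub (n : ℤ) (h : 3 ≤ n) : lam n ≤ 8/5 := by
  rw [lam_eq n h]
  have hd := den_pos n h
  have : 3 / ((n : ℝ) ^ 2 - 4) ≤ 3/5 := by
    rw [div_le_div_iff₀ (by linarith) (by norm_num)]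
    linarith
  linarith

lemma lam_nlb (n : ℤ) (h : n ≤ -3) : lam n < -1 := by
  have h' : 3 ≤ -n := by omega
  have := lam_lb (-n) h'
  rw [show n = -(-n) by ring, lam_neg]
  linarith

lemma lam_nub (n : ℤ) (h : n ≤ -3) : -(8/5) ≤ lam n := by
  have h' : 3 ≤ -n := by omega
  have := lam_ub (-n) h'
  rw [show n = -(-n) by ring, lam_neg]
  linarith

/-- All 4-wave resonances of λ are totally degenerate. -/
theorem stmt7 (n₁ n₂ n₃ n₄ : ℤ) (h1 : 3 ≤ |n₁|) (h2 : 3 ≤ |n₂|) (h3 : 3 ≤ |n₃|)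
    (h4 : 3 ≤ |n₄|) (hsum : n₁ + n₂ + n₃ + n₄ = 0)
    (hres : lam n₁ + lam n₂ + lam n₃ + lam n₄ = 0) :
    TotallyDegenerate n₁ n₂ n₃ n₄ := by
  have c1 : 3 ≤ n₁ ∨ n₁ ≤ -3 := by rcases abs_cases n₁ with ⟨h,_⟩|⟨h,_⟩ <;> omega
  have c2 : 3 ≤ n₂ ∨ n₂ ≤ -3 := by rcases abs_cases n₂ with ⟨h,_⟩|⟨h,_⟩ <;> omega
  have c3 : 3 ≤ n₃ ∨ n₃ ≤ -3 := by rcases abs_cases n₃ with ⟨h,_⟩|⟨h,_⟩ <;> omega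
  have c4 : 3 ≤ n₄ ∨ n₄ ≤ -3 := by rcases abs_cases n₄ with ⟨h,_⟩|⟨h,_⟩ <;> omega
  -- helper tactic facts
  rcases c1 with p1 | m1 <;> rcases c2 with p2 | m2 <;> rcases c3 with p3 | m3 <;>
    rcases c4 with p4 | m4
  -- ++++
  · exfalso
    have := lam_lb n₁ p1; have := lam_lb n₂ p2; have := lam_lb n₃ p3; have := lam_lb n₄ p4
    linarith
  -- +++-
  · exfalso
    have := lam_lb n₁ p1; have := lam_lb n₂ p2; have := lam_lb n₃ p3; have := lam_nub n₄ m4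
    linarith
  -- ++-+
  · exfalso
    have := lam_lb n₁ p1; have := lam_lb n₂ p2; have := lam_nub n₃ m3; have := lam_lb n₄ p4
    linarith
  -- ++--  : pair (1,2) vs (3,4)
  · have hk := key n₁ n₂ (-n₃) (-n₄) p1 p2 (by omega) (by omega) (by omega)
      (by rw [lam_neg, lam_neg]; linarith)
    rcases hk with ⟨e1, e2⟩ | ⟨e1, e2⟩
    · refine ⟨n₁, n₂, ?_⟩
      rw [show n₃ = -n₁ by omega, show n₄ = -n₂ by omega]
      all_goals simp only [Multiset.insert_eq_cons, ← Multiset.singleton_add]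
      all_goals abel
    · refine ⟨n₁, n₂, ?_⟩
      rw [show n₃ = -n₂ by omega, show n₄ = -n₁ by omega]
      all_goals simp only [Multiset.insert_eq_cons, ← Multiset.singleton_add]
      all_goals abel
  -- +-++
  · exfalso
    have := lam_lb n₁ p1; have := lam_nub n₂ m2; have := lam_lb n₃ p3; have := lam_lb n₄ p4
    linarith
  -- +-+-  : pair (1,3) vs (2,4)
  · have hk := key n₁ n₃ (-n₂) (-n₄) p1 p3 (by omega) (by omega) (by omega)
      (by rw [lam_neg, lam_neg]; linarith)
    rcases hk with ⟨e1, e2⟩ | ⟨e1, e2⟩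
    · refine ⟨n₁, n₃, ?_⟩
      rw [show n₂ = -n₁ by omega, show n₄ = -n₃ by omega]
      all_goals simp only [Multiset.insert_eq_cons, ← Multiset.singleton_add]
      all_goals abel
    · refine ⟨n₁, n₃, ?_⟩
      rw [show n₂ = -n₃ by omega, show n₄ = -n₁ by omega]
      all_goals simp only [Multiset.insert_eq_cons, ← Multiset.singleton_add]
      all_goals abel
  -- +--+  : pair (1,4) vs (2,3)
  · have hk := key n₁ n₄ (-n₂) (-n₃) p1 p4 (by omega) (by omega) (by omega)
      (by rw [lam_neg, lam_neg]; linarith)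
    rcases hk with ⟨e1, e2⟩ | ⟨e1, e2⟩
    · refine ⟨n₁, n₄, ?_⟩
      rw [show n₂ = -n₁ by omega, show n₃ = -n₄ by omega]
      all_goals simp only [Multiset.insert_eq_cons, ← Multiset.singleton_add]
      all_goals abel
    · refine ⟨n₁, n₄, ?_⟩
      rw [show n₂ = -n₄ by omega, show n₃ = -n₁ by omega]
      all_goals simp only [Multiset.insert_eq_cons, ← Multiset.singleton_add]
      all_goals abel
  -- +---
  · exfalso
    have := lam_lb n₁ p1; have := lam_nlb n₂ m2; have := lam_nlb n₃ m3; have := lam_nlb n₄ m4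
    have := lam_ub n₁ p1
    linarith
  -- -+++
  · exfalso
    have := lam_nub n₁ m1; have := lam_lb n₂ p2; have := lam_lb n₃ p3; have := lam_lb n₄ p4
    linarith
  -- -++-  : pair (2,3) vs (1,4)
  · have hk := key n₂ n₃ (-n₁) (-n₄) p2 p3 (by omega) (by omega) (by omega)
      (by rw [lam_neg, lam_neg]; linarith)
    rcases hk with ⟨e1, e2⟩ | ⟨e1, e2⟩
    · refine ⟨n₂, n₃, ?_⟩
      rw [show n₁ = -n₂ by omega, show n₄ = -n₃ by omega]
      all_goals simp only [Multiset.insert_eq_cons, ← Multiset.singleton_add]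
      all_goals abel
    · refine ⟨n₂, n₃, ?_⟩
      rw [show n₁ = -n₃ by omega, show n₄ = -n₂ by omega]
      all_goals simp only [Multiset.insert_eq_cons, ← Multiset.singleton_add]
      all_goals abel
  -- -+-+  : pair (2,4) vs (1,3)
  · have hk := key n₂ n₄ (-n₁) (-n₃) p2 p4 (by omega) (by omega) (by omega)
      (by rw [lam_neg, lam_neg]; linarith)
    rcases hk with ⟨e1, e2⟩ | ⟨e1, e2⟩
    · refine ⟨n₂, n₄, ?_⟩
      rw [show n₁ = -n₂ by omega, show n₃ = -n₄ by omega]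
      all_goals simp only [Multiset.insert_eq_cons, ← Multiset.singleton_add]
      all_goals abel
    · refine ⟨n₂, n₄, ?_⟩
      rw [show n₁ = -n₄ by omega, show n₃ = -n₂ by omega]
      all_goals simp only [Multiset.insert_eq_cons, ← Multiset.singleton_add]
      all_goals abel
  -- -+--
  · exfalso
    have := lam_nlb n₁ m1; have := lam_lb n₂ p2; have := lam_nlb n₃ m3; have := lam_nlb n₄ m4
    have := lam_ub n₂ p2
    linarith
  -- --++  : pair (3,4) vs (1,2)
  · have hk := key n₃ n₄ (-n₁) (-n₂) p3 p4 (by omega) (by omega) (by omega)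
      (by rw [lam_neg, lam_neg]; linarith)
    rcases hk with ⟨e1, e2⟩ | ⟨e1, e2⟩
    · refine ⟨n₃, n₄, ?_⟩
      rw [show n₁ = -n₃ by omega, show n₂ = -n₄ by omega]
      all_goals simp only [Multiset.insert_eq_cons, ← Multiset.singleton_add]
      all_goals abel
    · refine ⟨n₃, n₄, ?_⟩
      rw [show n₁ = -n₄ by omega, show n₂ = -n₃ by omega]
      all_goals simp only [Multiset.insert_eq_cons, ← Multiset.singleton_add]
      all_goals abel
  -- --+-
  · exfalso
    have := lam_nlb n₁ m1; have := lam_nlb n₂ m2; have := lam_lb n₃ p3; have := lam_nlb n₄ m4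
    have := lam_ub n₃ p3
    linarith
  -- ---+
  · exfalso
    have := lam_nlb n₁ m1; have := lam_nlb n₂ m2; have := lam_nlb n₃ m3; have := lam_lb n₄ p4
    have := lam_ub n₄ p4
    linarith
  -- ----
  · exfalso
    have := lam_nlb n₁ m1; have := lam_nlb n₂ m2; have := lam_nlb n₃ m3; have := lam_nlb n₄ m4
    linarith
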